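/- Let V0 ~ Beta(1+α1, α2) and V1, V2 ~ Beta(1, α1) be independent, and set S1 = V0·V1, S2 = V0·V2. Then S1 and S2 each have the Beta(1, α1+α2) distribution. -/

import Mathlib

open MeasureTheory ProbabilityTheory Real Filter

/-- The density of a Beta(a,b) random variable on (0,1). -/
noncomputable def _root_.betaPDFReal (a b x : ℝ) : ℝ :=
  if 0 < x ∧ x < 1 then
    (Real.Gamma (a + b) / (Real.Gamma a * Real.Gamma b)) * x ^ (a - 1) * (1 - x) ^ (b - 1)
  else 0

/-- The Beta(a,b) probability measure on ℝ. -/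
noncomputable def _root_.betaMeasure (a b : ℝ) : Measure ℝ :=
  MeasureTheory.volume.withDensity (fun x => ENNReal.ofReal (_root_.betaPDFReal a b x))

/-- `X` is a beta random variable with parameters `(a, b)` on `(Ω, μ)`. -/
def HasBetaLaw {Ω : Type*} [MeasurableSpace Ω] (μ : Measure Ω) (X : Ω → ℝ) (a b : ℝ) : Prop :=
  Measurable X ∧ μ.map X = _root_.betaMeasure a b


section BetaHelpers
open Set

lemma betaEqOn {u v : ℝ} : Set.EqOn (fun x : ℝ => ((x ^ (u-1) * (1-x) ^ (v-1) : ℝ) : ℂ))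
    (fun x : ℝ => (x:ℂ) ^ ((u:ℂ)-1) * (1-(x:ℂ)) ^ ((v:ℂ)-1)) (Set.uIcc 0 1) := by
  intro x hx
  rw [Set.uIcc_of_le (by norm_num)] at hx
  have h1 : (0:ℝ) ≤ x := hx.1
  have h2 : (0:ℝ) ≤ 1 - x := by linarith [hx.2]
  push_cast
  rw [Complex.ofReal_cpow h1, Complex.ofReal_cpow h2]
  push_cast
  ring

lemma realBetaIntegrable {u v : ℝ} (hu : 0 < u) (hv : 0 < v) :
    IntervalIntegrable (fun x : ℝ => x ^ (u - 1) * (1 - x) ^ (v - 1)) volume 0 1 := by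
  have hc := Complex.betaIntegral_convergent (u := u) (v := v) (by simpa) (by simpa)
  have hc2 : IntervalIntegrable (fun x : ℝ => ((x ^ (u-1) * (1-x) ^ (v-1) : ℝ) : ℂ)) volume 0 1 := by
    apply hc.congr
    intro x hx
    exact (betaEqOn (uIoc_subset_uIcc hx)).symm
  constructor
  · have := (Complex.reCLM.integrable_comp hc2.1)
    simpa [IntegrableOn] using this
  · have := (Complex.reCLM.integrable_comp hc2.2)
    simpa [IntegrableOn] using this

lemma realBetaIntegral {u v : ℝ} (hu : 0 < u) (hv : 0 < v) :
    ∫ x in (0:ℝ)..1, x ^ (u - 1) * (1 - x) ^ (v - 1)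
      = Real.Gamma u * Real.Gamma v / Real.Gamma (u + v) := by
  have key := Complex.Gamma_mul_Gamma_eq_betaIntegral (s := u) (t := v) (by simpa) (by simpa)
  have hne : Complex.Gamma (u + v) ≠ 0 := Complex.Gamma_ne_zero_of_re_pos (by simp; positivity)
  have hβ : Complex.betaIntegral u v = Complex.Gamma u * Complex.Gamma v / Complex.Gamma (u+v) := by
    rw [key]; field_simp
  have : ((∫ x in (0:ℝ)..1, x ^ (u - 1) * (1 - x) ^ (v - 1) : ℝ) : ℂ)
      = Complex.betaIntegral u v := by
    rw [← intervalIntegral.integral_ofReal]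
    rw [Complex.betaIntegral]
    exact intervalIntegral.integral_congr betaEqOn
  rw [hβ] at this
  have h2 : ((Real.Gamma u * Real.Gamma v / Real.Gamma (u+v) : ℝ) : ℂ)
      = Complex.Gamma u * Complex.Gamma v / Complex.Gamma (u+v) := by
    push_cast [← Complex.Gamma_ofReal]; ring
  rw [← h2] at this
  exact_mod_cast this


lemma betaPDFReal_nonneg {a b : ℝ} (ha : 0 < a) (hb : 0 < b) (x : ℝ) :
    0 ≤ _root_.betaPDFReal a b x := by
  unfold _root_.betaPDFReal
  split_ifs with h
  · have hG1 := Real.Gamma_pos_of_pos ha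
    have hG2 := Real.Gamma_pos_of_pos hb
    have h1 : (0:ℝ) ≤ x ^ (a-1) := Real.rpow_nonneg h.1.le _
    have h2 : (0:ℝ) ≤ (1-x) ^ (b-1) := Real.rpow_nonneg (by linarith [h.2]) _
    positivity
  · exact le_refl 0

lemma betaPDFReal_measurable (a b : ℝ) : Measurable (_root_.betaPDFReal a b) := by
  unfold _root_.betaPDFReal
  apply Measurable.ite
  · exact (measurableSet_lt measurable_const measurable_id).inter
      (measurableSet_lt measurable_id measurable_const)
  · fun_prop
  · fun_prop

lemma betaPDFReal_eq_zero {a b x : ℝ} (h : ¬(0 < x ∧ x < 1)) : _root_.betaPDFReal a b x = 0 := by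
  unfold _root_.betaPDFReal; rw [if_neg h]

lemma betaPDFReal_of_mem {a b x : ℝ} (h : 0 < x) (h' : x < 1) :
    _root_.betaPDFReal a b x
      = (Real.Gamma (a + b) / (Real.Gamma a * Real.Gamma b)) * x ^ (a - 1) * (1 - x) ^ (b - 1) := by
  unfold _root_.betaPDFReal; rw [if_pos ⟨h, h'⟩]

/-- restriction helper: integrating `pdf * g` is the same as over `Ioo 0 1`. -/
lemma lintegral_betaPDF_mul (a b : ℝ) (g : ℝ → ENNReal) :
    ∫⁻ x, ENNReal.ofReal (_root_.betaPDFReal a b x) * g x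
      = ∫⁻ x in Ioo (0:ℝ) 1, ENNReal.ofReal (_root_.betaPDFReal a b x) * g x := by
  rw [← lintegral_indicator measurableSet_Ioo]
  congr 1
  funext x
  by_cases h : x ∈ Ioo (0:ℝ) 1
  · rw [Set.indicator_of_mem h]
  · rw [Set.indicator_of_notMem h, betaPDFReal_eq_zero (by simpa [Set.mem_Ioo] using h)]
    simp

lemma betaMeasure_apply (a b : ℝ) {s : Set ℝ} (hs : MeasurableSet s) :
    _root_.betaMeasure a b s = ∫⁻ x in s, ENNReal.ofReal (_root_.betaPDFReal a b x) := by
  rw [_root_.betaMeasure, withDensity_apply _ hs]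

lemma betaPDF_integrableOn {a b : ℝ} (ha : 0 < a) (hb : 0 < b) :
    IntegrableOn (_root_.betaPDFReal a b) (Ioo (0:ℝ) 1) volume := by
  have hI : IntervalIntegrable (fun x : ℝ => x ^ (a - 1) * (1 - x) ^ (b - 1)) volume 0 1 :=
    realBetaIntegrable ha hb
  have h2 : IntegrableOn (fun x : ℝ => x ^ (a - 1) * (1 - x) ^ (b - 1)) (Ioo (0:ℝ) 1) volume :=
    ((intervalIntegrable_iff_integrableOn_Ioo_of_le (by norm_num)).mp hI)
  have h3 := (h2.const_mul (Real.Gamma (a + b) / (Real.Gamma a * Real.Gamma b)))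
  apply (integrableOn_congr_fun (fun x hx => ?_) measurableSet_Ioo).mpr h3
  rw [betaPDFReal_of_mem hx.1 hx.2]; ring

lemma betaNorm {a b : ℝ} (ha : 0 < a) (hb : 0 < b) :
    ∫ x in Ioo (0:ℝ) 1, _root_.betaPDFReal a b x = 1 := by
  have h1 : ∫ x in Ioo (0:ℝ) 1, _root_.betaPDFReal a b x
      = ∫ x in Ioo (0:ℝ) 1,
          (Real.Gamma (a + b) / (Real.Gamma a * Real.Gamma b)) * (x ^ (a-1) * (1-x) ^ (b-1)) := by
    apply setIntegral_congr_fun measurableSet_Ioo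
    intro x hx
    rw [betaPDFReal_of_mem hx.1 hx.2]; ring
  rw [h1, integral_const_mul, ← integral_Ioc_eq_integral_Ioo,
    ← intervalIntegral.integral_of_le (by norm_num : (0:ℝ) ≤ 1), realBetaIntegral ha hb]
  have hG1 := Real.Gamma_pos_of_pos ha
  have hG2 := Real.Gamma_pos_of_pos hb
  have hG3 := Real.Gamma_pos_of_pos (by linarith : (0:ℝ) < a + b)
  field_simp

lemma betaMeasure_isProb {a b : ℝ} (ha : 0 < a) (hb : 0 < b) :
    IsProbabilityMeasure (_root_.betaMeasure a b) := by
  constructor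
  rw [betaMeasure_apply _ _ MeasurableSet.univ, Measure.restrict_univ]
  have h := lintegral_betaPDF_mul a b (fun _ => 1)
  simp only [mul_one] at h
  rw [h, ← ofReal_integral_eq_lintegral_ofReal (betaPDF_integrableOn ha hb)
    (Filter.Eventually.of_forall (betaPDFReal_nonneg ha hb)), betaNorm ha hb]
  simp

lemma betaMeasure_one_Iic {c : ℝ} (hc : 0 < c) (t : ℝ) :
    _root_.betaMeasure 1 c (Set.Iic t) = ENNReal.ofReal (1 - (1 - max 0 (min t 1)) ^ c) := by
  set m := max 0 (min t 1) with hm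
  have hm0 : 0 ≤ m := le_max_left _ _
  have hm1 : m ≤ 1 := max_le (by norm_num) (min_le_right _ _)
  rw [betaMeasure_apply _ _ measurableSet_Iic]
  have hstep : ∫⁻ x in Set.Iic t, ENNReal.ofReal (_root_.betaPDFReal 1 c x)
      = ∫⁻ x in Set.Ioc 0 m, ENNReal.ofReal (_root_.betaPDFReal 1 c x) := by
    rw [← lintegral_indicator measurableSet_Iic, ← lintegral_indicator measurableSet_Ioc]
    congr 1
    funext x
    by_cases hx : 0 < x ∧ x < 1
    · have hmem : x ∈ Set.Iic t ↔ x ∈ Set.Ioc 0 m := by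
        simp only [Set.mem_Iic, Set.mem_Ioc, hm]
        constructor
        · intro h; exact ⟨hx.1, le_max_of_le_right (le_min h hx.2.le)⟩
        · intro h
          rcases le_or_gt t 1 with h1 | h1
          · rcases le_or_gt t 0 with h0 | h0
            · exfalso; have : m ≤ 0 := by simp [hm, min_eq_left h1, h0]
              linarith [hx.1, h.2]
            · have : m = t := by rw [hm, min_eq_left h1, max_eq_right h0.le]
              linarith [h.2, this ▸ h.2]
          · linarith [hx.2]
      by_cases h : x ∈ Set.Iic t
      · rw [Set.indicator_of_mem h, Set.indicator_of_mem (hmem.mp h)]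
      · rw [Set.indicator_of_notMem h, Set.indicator_of_notMem (fun hh => h (hmem.mpr hh))]
    · simp only [Set.indicator_apply]
      split_ifs <;> simp [betaPDFReal_eq_zero hx]
  rw [hstep, ← Measure.restrict_congr_set Ioo_ae_eq_Ioc]
  have hInt : IntegrableOn (_root_.betaPDFReal 1 c) (Set.Ioo (0:ℝ) m) volume :=
    (betaPDF_integrableOn one_pos hc).mono_set (Set.Ioo_subset_Ioo le_rfl hm1)
  rw [← ofReal_integral_eq_lintegral_ofReal hInt
    (Filter.Eventually.of_forall (betaPDFReal_nonneg one_pos hc))]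
  congr 1
  have h2 : ∫ x in Set.Ioo (0:ℝ) m, _root_.betaPDFReal 1 c x
      = ∫ x in Set.Ioo (0:ℝ) m, c * (1-x) ^ (c-1) := by
    apply setIntegral_congr_fun measurableSet_Ioo
    intro x hx
    rw [betaPDFReal_of_mem hx.1 (lt_of_lt_of_le hx.2 hm1)]
    rw [show (1:ℝ) + c = c + 1 by ring, Real.Gamma_add_one (ne_of_gt hc), Real.Gamma_one,
      sub_self, Real.rpow_zero]
    field_simp
  rw [h2, ← integral_Ioc_eq_integral_Ioo, ← intervalIntegral.integral_of_le hm0,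
    intervalIntegral.integral_const_mul]
  have h3 : ∫ x in (0:ℝ)..m, (1-x) ^ (c-1) = ∫ x in (1-m)..(1:ℝ), x ^ (c-1) := by
    have := intervalIntegral.integral_comp_sub_left (a := 0) (b := m)
      (fun x : ℝ => x ^ (c-1)) 1
    simpa using this
  rw [h3, integral_rpow (Or.inl (by linarith))]
  rw [sub_add_cancel, Real.one_rpow]
  field_simp

lemma keyJ {a b t : ℝ} (ha : 0 < a) (hb : 0 < b) (ht1 : t < 1) :
    ∫ x in t..1, (x - t) ^ a * (1 - x) ^ (b - 1)
      = (1 - t) ^ (a + b) * (Real.Gamma (a + 1) * Real.Gamma b / Real.Gamma (a + 1 + b)) := by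
  have hs : (0:ℝ) < 1 - t := by linarith
  have h1 : ∫ x in t..1, (x - t) ^ a * (1 - x) ^ (b - 1)
      = ∫ x in (0:ℝ)..(1-t), x ^ a * (1 - t - x) ^ (b - 1) := by
    have := intervalIntegral.integral_comp_add_right
      (a := 0) (b := 1 - t) (fun x : ℝ => (x - t) ^ a * (1 - x) ^ (b - 1)) t
    simp only [zero_add, sub_add_cancel] at this
    rw [← this]
    apply intervalIntegral.integral_congr
    intro x _
    simp only
    ring_nf
  have h2 : ∫ x in (0:ℝ)..1, ((1-t) * x) ^ a * (1 - t - (1-t) * x) ^ (b - 1)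
      = (1-t)⁻¹ • ∫ x in (0:ℝ)..(1-t), x ^ a * (1 - t - x) ^ (b - 1) := by
    have := intervalIntegral.integral_comp_mul_left
      (a := 0) (b := 1) (c := 1 - t) (fun x : ℝ => x ^ a * (1 - t - x) ^ (b - 1)) (ne_of_gt hs)
    simpa using this
  have h3 : ∫ x in (0:ℝ)..1, ((1-t) * x) ^ a * (1 - t - (1-t) * x) ^ (b - 1)
      = (1-t) ^ (a + b - 1) * ∫ x in (0:ℝ)..1, x ^ a * (1 - x) ^ (b - 1) := by
    rw [← intervalIntegral.integral_const_mul]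
    apply intervalIntegral.integral_congr
    intro x hx
    rw [Set.uIcc_of_le (by norm_num)] at hx
    have hx0 : (0:ℝ) ≤ x := hx.1
    have hx1 : (0:ℝ) ≤ 1 - x := by linarith [hx.2]
    simp only
    rw [show 1 - t - (1-t) * x = (1-t) * (1 - x) by ring,
      Real.mul_rpow hs.le hx0, Real.mul_rpow hs.le hx1,
      show a + b - 1 = a + (b-1) by ring, Real.rpow_add hs]
    ring
  have h4 : ∫ x in (0:ℝ)..1, x ^ a * (1 - x) ^ (b - 1)
      = Real.Gamma (a+1) * Real.Gamma b / Real.Gamma (a + 1 + b) := by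
    have := realBetaIntegral (u := a + 1) (v := b) (by linarith) hb
    simpa using this
  rw [h1]
  have := h2.symm
  rw [smul_eq_mul] at this
  have h5 : ∫ x in (0:ℝ)..(1-t), x ^ a * (1 - t - x) ^ (b - 1)
      = (1-t) * ((1-t) ^ (a + b - 1) * (Real.Gamma (a+1) * Real.Gamma b / Real.Gamma (a + 1 + b))) := by
    rw [← h4, ← h3, h2, smul_eq_mul]
    field_simp
  rw [h5, ← mul_assoc]
  congr 1
  rw [show a + b = 1 + (a + b - 1) by ring, Real.rpow_add hs, Real.rpow_one]
  ring_nf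

noncomputable def Gfun (a t : ℝ) : ℝ := 1 - (1 - max 0 (min t 1)) ^ a

lemma Gfun_nonneg {a : ℝ} (ha : 0 < a) (t : ℝ) : 0 ≤ Gfun a t := by
  unfold Gfun
  have h1 : (0:ℝ) ≤ 1 - max 0 (min t 1) := by
    have : max 0 (min t 1) ≤ 1 := max_le (by norm_num) (min_le_right _ _)
    linarith
  have := Real.rpow_le_one h1 (by
    have : (0:ℝ) ≤ max 0 (min t 1) := le_max_left _ _
    linarith) ha.le
  linarith

lemma Gfun_le_one {a : ℝ} (ha : 0 < a) (t : ℝ) : Gfun a t ≤ 1 := by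
  unfold Gfun
  have h1 : (0:ℝ) ≤ 1 - max 0 (min t 1) := by
    have : max 0 (min t 1) ≤ 1 := max_le (by norm_num) (min_le_right _ _)
    linarith
  have := Real.rpow_nonneg h1 a
  linarith

lemma Gfun_measurable (a t : ℝ) : Measurable (fun x => Gfun a (t / x)) := by
  unfold Gfun
  fun_prop

/-- The main real computation, middle case 0 < t < 1. -/
lemma keyReal {a b : ℝ} (ha : 0 < a) (hb : 0 < b) {t : ℝ} (ht0 : 0 < t) (ht1 : t < 1) :
    ∫ x in Ioo (0:ℝ) 1, _root_.betaPDFReal (1+a) b x * Gfun a (t / x) = 1 - (1-t) ^ (a+b) := by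
  have ha1 : (0:ℝ) < 1 + a := by linarith
  set C := Real.Gamma (1 + a + b) / (Real.Gamma (1+a) * Real.Gamma b) with hC
  -- integrability of f1·(1-G) and f1·G
  have hf1 : IntegrableOn (_root_.betaPDFReal (1+a) b) (Ioo (0:ℝ) 1) volume := betaPDF_integrableOn ha1 hb
  have hbound : ∀ x ∈ Ioo (0:ℝ) 1,
      ‖_root_.betaPDFReal (1+a) b x * (1 - Gfun a (t/x))‖ ≤ ‖_root_.betaPDFReal (1+a) b x‖ := by
    intro x hx
    rw [norm_mul]
    have h0 : 0 ≤ _root_.betaPDFReal (1+a) b x := betaPDFReal_nonneg ha1 hb x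
    have hg0 := Gfun_nonneg ha (t/x)
    have hg1 := Gfun_le_one ha (t/x)
    rw [Real.norm_of_nonneg h0, Real.norm_of_nonneg (by linarith)]
    nlinarith
  have hmeas : Measurable fun x => _root_.betaPDFReal (1+a) b x * (1 - Gfun a (t/x)) :=
    (betaPDFReal_measurable _ _).mul (measurable_const.sub (Gfun_measurable a t))
  have hint2 : IntegrableOn (fun x => _root_.betaPDFReal (1+a) b x * (1 - Gfun a (t/x)))
      (Ioo (0:ℝ) 1) volume := by
    apply Integrable.mono hf1 hmeas.aestronglyMeasurable
    filter_upwards [ae_restrict_mem measurableSet_Ioo] with x hx using hbound x hx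
  -- split
  have hsplit : ∫ x in Ioo (0:ℝ) 1, _root_.betaPDFReal (1+a) b x * Gfun a (t / x)
      = (∫ x in Ioo (0:ℝ) 1, _root_.betaPDFReal (1+a) b x)
        - ∫ x in Ioo (0:ℝ) 1, _root_.betaPDFReal (1+a) b x * (1 - Gfun a (t/x)) := by
    rw [← integral_sub hf1 hint2]
    congr 1; funext x; ring
  rw [hsplit, betaNorm ha1 hb]
  -- rewrite the second integral as an indicator integral
  have hind : ∀ x ∈ Ioo (0:ℝ) 1,
      _root_.betaPDFReal (1+a) b x * (1 - Gfun a (t/x))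
        = (Ioo t 1).indicator (fun x => C * ((x - t) ^ a * (1 - x) ^ (b-1))) x := by
    intro x hx
    rcases le_or_gt x t with hxt | hxt
    · have h1 : (1:ℝ) ≤ t / x := (le_div_iff₀ hx.1).mpr (by linarith)
      have : min (t/x) 1 = 1 := min_eq_right h1
      rw [Set.indicator_of_notMem (by simp [Set.mem_Ioo]; intro h; linarith)]
      unfold Gfun
      rw [this, max_eq_right (by norm_num : (0:ℝ) ≤ 1)]
      simp [Real.zero_rpow (ne_of_gt ha)]
    · have hdiv0 : 0 < t / x := div_pos ht0 hx.1
      have hdiv1 : t / x < 1 := (div_lt_one hx.1).mpr hxt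
      rw [Set.indicator_of_mem (Set.mem_Ioo.mpr ⟨hxt, hx.2⟩)]
      unfold Gfun
      rw [min_eq_left hdiv1.le, max_eq_right hdiv0.le]
      rw [betaPDFReal_of_mem hx.1 hx.2]
      have hxx : x ^ ((1+a) - 1) = x ^ a := by norm_num
      have hmul : x ^ a * (1 - t/x) ^ a = (x - t) ^ a := by
        rw [← Real.mul_rpow hx.1.le (by
          have : t / x ≤ 1 := hdiv1.le
          linarith)]
        congr 1
        rw [mul_sub, mul_one, mul_div_cancel₀ _ (ne_of_gt hx.1)]
      rw [hxx]
      have : (1:ℝ) - (1 - (1 - t/x) ^ a) = (1 - t/x) ^ a := by ring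
      rw [this, ← hC]
      calc C * x ^ a * (1-x) ^ (b-1) * (1 - t/x) ^ a
          = C * ((x ^ a * (1 - t/x) ^ a) * (1-x) ^ (b-1)) := by ring
        _ = C * ((x - t) ^ a * (1-x) ^ (b-1)) := by rw [hmul]
  rw [setIntegral_congr_fun measurableSet_Ioo hind, setIntegral_indicator measurableSet_Ioo]
  have hinter : Ioo (0:ℝ) 1 ∩ Ioo t 1 = Ioo t 1 := by
    rw [Set.inter_eq_right]
    exact Set.Ioo_subset_Ioo ht0.le le_rfl
  rw [hinter, ← integral_Ioc_eq_integral_Ioo, ← intervalIntegral.integral_of_le ht1.le,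
    intervalIntegral.integral_const_mul, keyJ ha hb ht1]
  have hG1 := Real.Gamma_pos_of_pos ha1
  have hG2 := Real.Gamma_pos_of_pos hb
  have hG3 : Real.Gamma (a + 1 + b) = Real.Gamma (1 + a + b) := by ring_nf
  have hG4 : Real.Gamma (a + 1) = Real.Gamma (1 + a) := by ring_nf
  rw [hC, hG3, hG4]
  have hG5 := Real.Gamma_pos_of_pos (by linarith : (0:ℝ) < 1 + a + b)
  field_simp

lemma Gfun_eval_neg {a t : ℝ} (ht : t ≤ 0) : Gfun a t = 0 := by
  unfold Gfun
  rw [min_eq_left (by linarith : t ≤ 1), max_eq_left ht, sub_zero, Real.one_rpow, sub_self]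

lemma Gfun_eval_ge_one {a t : ℝ} (ha : 0 < a) (ht : 1 ≤ t) : Gfun a t = 1 := by
  unfold Gfun
  rw [min_eq_right ht, max_eq_right (by norm_num : (0:ℝ) ≤ 1), sub_self,
    Real.zero_rpow (ne_of_gt ha), sub_zero]

lemma Gfun_eval_mid {a t : ℝ} (ht0 : 0 ≤ t) (ht1 : t ≤ 1) : Gfun a t = 1 - (1 - t) ^ a := by
  unfold Gfun
  rw [min_eq_left ht1, max_eq_right ht0]

lemma pdfG_integrable {a b t : ℝ} (ha : 0 < a) (hb : 0 < b) :
    IntegrableOn (fun x => _root_.betaPDFReal (1+a) b x * Gfun a (t/x)) (Ioo (0:ℝ) 1) volume := by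
  have ha1 : (0:ℝ) < 1 + a := by linarith
  have hf1 : IntegrableOn (_root_.betaPDFReal (1+a) b) (Ioo (0:ℝ) 1) volume := betaPDF_integrableOn ha1 hb
  apply Integrable.mono hf1
    (((betaPDFReal_measurable _ _).mul (Gfun_measurable a t)).aestronglyMeasurable)
  filter_upwards [] with x
  rw [Pi.mul_apply, norm_mul]
  have h0 : 0 ≤ _root_.betaPDFReal (1+a) b x := betaPDFReal_nonneg ha1 hb x
  have hg0 := Gfun_nonneg ha (t/x)
  have hg1 := Gfun_le_one ha (t/x)
  rw [Real.norm_of_nonneg h0, Real.norm_of_nonneg hg0]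
  nlinarith

lemma mainMap {a b : ℝ} (ha : 0 < a) (hb : 0 < b) :
    Measure.map (fun p : ℝ × ℝ => p.1 * p.2) ((_root_.betaMeasure (1+a) b).prod (_root_.betaMeasure 1 a))
      = _root_.betaMeasure 1 (a+b) := by
  have ha1 : (0:ℝ) < 1 + a := by linarith
  have hab : (0:ℝ) < a + b := by linarith
  haveI i1 := betaMeasure_isProb ha1 hb
  haveI i2 := betaMeasure_isProb one_pos ha
  haveI i3 := betaMeasure_isProb one_pos hab
  haveI : IsProbabilityMeasure
      (Measure.map (fun p : ℝ × ℝ => p.1 * p.2) ((_root_.betaMeasure (1+a) b).prod (_root_.betaMeasure 1 a))) :=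
    Measure.isProbabilityMeasure_map (by fun_prop)
  apply Measure.ext_of_Iic
  intro t
  rw [Measure.map_apply (by fun_prop) measurableSet_Iic]
  have hS : MeasurableSet ((fun p : ℝ × ℝ => p.1 * p.2) ⁻¹' Set.Iic t) :=
    (measurable_fst.mul measurable_snd) measurableSet_Iic
  rw [Measure.prod_apply hS]
  have hmeasG : Measurable fun x => _root_.betaMeasure 1 a (Prod.mk x ⁻¹' ((fun p : ℝ × ℝ => p.1 * p.2) ⁻¹' Set.Iic t)) :=
    measurable_measure_prodMk_left hS
  rw [show _root_.betaMeasure (1+a) b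
      = MeasureTheory.volume.withDensity (fun x => ENNReal.ofReal (_root_.betaPDFReal (1+a) b x)) from rfl,
    lintegral_withDensity_eq_lintegral_mul _ ((betaPDFReal_measurable _ _).ennreal_ofReal) hmeasG]
  have step1 : ∫⁻ x, (fun x => ENNReal.ofReal (_root_.betaPDFReal (1+a) b x)) x *
        _root_.betaMeasure 1 a (Prod.mk x ⁻¹' ((fun p : ℝ × ℝ => p.1 * p.2) ⁻¹' Set.Iic t)) ∂volume
      = ∫⁻ x in Ioo (0:ℝ) 1, ENNReal.ofReal (_root_.betaPDFReal (1+a) b x) *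
        _root_.betaMeasure 1 a (Prod.mk x ⁻¹' ((fun p : ℝ × ℝ => p.1 * p.2) ⁻¹' Set.Iic t)) := by
    exact lintegral_betaPDF_mul (1+a) b _
  simp only [Pi.mul_apply]
  rw [step1]
  have step2 : ∫⁻ x in Ioo (0:ℝ) 1, ENNReal.ofReal (_root_.betaPDFReal (1+a) b x) *
        _root_.betaMeasure 1 a (Prod.mk x ⁻¹' ((fun p : ℝ × ℝ => p.1 * p.2) ⁻¹' Set.Iic t))
      = ∫⁻ x in Ioo (0:ℝ) 1, ENNReal.ofReal (_root_.betaPDFReal (1+a) b x * Gfun a (t/x)) := by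
    apply setLIntegral_congr_fun measurableSet_Ioo
    intro x hx
    beta_reduce
    have hpre : Prod.mk x ⁻¹' ((fun p : ℝ × ℝ => p.1 * p.2) ⁻¹' Set.Iic t) = Set.Iic (t/x) := by
      ext y
      simp only [Set.mem_preimage, Set.mem_Iic]
      rw [← le_div_iff₀' hx.1]
    rw [hpre, betaMeasure_one_Iic ha (t/x),
      ENNReal.ofReal_mul (betaPDFReal_nonneg ha1 hb x)]
    rfl
  rw [step2, ← ofReal_integral_eq_lintegral_ofReal (pdfG_integrable ha hb)
    (Filter.Eventually.of_forall fun x =>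
      mul_nonneg (betaPDFReal_nonneg ha1 hb x) (Gfun_nonneg ha _)),
    betaMeasure_one_Iic hab t]
  rw [show (1 - (1 - max 0 (min t 1)) ^ (a+b)) = Gfun (a+b) t from rfl]
  congr 1
  rcases le_or_gt t 0 with ht | ht
  · rw [Gfun_eval_neg ht]
    have hz : ∫ x in Ioo (0:ℝ) 1, _root_.betaPDFReal (1+a) b x * Gfun a (t/x)
        = ∫ _x in Ioo (0:ℝ) 1, (0:ℝ) := by
      apply setIntegral_congr_fun measurableSet_Ioo
      intro x hx
      have hdd : t / x ≤ 0 := div_nonpos_of_nonpos_of_nonneg ht hx.1.le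
      show _root_.betaPDFReal (1+a) b x * Gfun a (t/x) = 0
      rw [Gfun_eval_neg hdd, mul_zero]
    rw [hz, integral_zero]
  · rcases lt_or_ge t 1 with ht1 | ht1
    · rw [keyReal ha hb ht ht1, Gfun_eval_mid ht.le ht1.le]
    · rw [Gfun_eval_ge_one hab ht1]
      have hz : ∫ x in Ioo (0:ℝ) 1, _root_.betaPDFReal (1+a) b x * Gfun a (t/x)
          = ∫ x in Ioo (0:ℝ) 1, _root_.betaPDFReal (1+a) b x := by
        apply setIntegral_congr_fun measurableSet_Ioo
        intro x hx
        have hdd : (1:ℝ) ≤ t / x := by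
          rw [le_div_iff₀ hx.1]
          nlinarith [hx.2]
        show _root_.betaPDFReal (1+a) b x * Gfun a (t/x) = _root_.betaPDFReal (1+a) b x
        rw [Gfun_eval_ge_one ha hdd, mul_one]
      rw [hz, betaNorm ha1 hb]

lemma prodBetaLaw {Ω : Type*} [MeasurableSpace Ω] (μ : Measure Ω) [IsProbabilityMeasure μ]
    (X Y : Ω → ℝ) (a b : ℝ) (ha : 0 < a) (hb : 0 < b)
    (hX : HasBetaLaw μ X (1+a) b) (hY : HasBetaLaw μ Y 1 a) (h : IndepFun X Y μ) :
    HasBetaLaw μ (fun ω => X ω * Y ω) 1 (a+b) := by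
  refine ⟨hX.1.mul hY.1, ?_⟩
  have hmap : μ.map (fun ω => (X ω, Y ω)) = (μ.map X).prod (μ.map Y) :=
    (indepFun_iff_map_prod_eq_prod_map_map hX.1.aemeasurable hY.1.aemeasurable).1 h
  have hcomp : (fun ω => X ω * Y ω)
      = (fun p : ℝ × ℝ => p.1 * p.2) ∘ (fun ω => (X ω, Y ω)) := rfl
  rw [hcomp, ← Measure.map_map (by fun_prop) (hX.1.prodMk hY.1), hmap, hX.2, hY.2,
    mainMap ha hb]


end BetaHelpers

theorem betaProduct_H1_marginals {Ω : Type*} [MeasurableSpace Ω] (μ : Measure Ω)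
    [IsProbabilityMeasure μ] (V0 V1 V2 : Ω → ℝ) (α1 α2 : ℝ) (hα1 : 0 < α1) (hα2 : 0 < α2)
    (h0 : HasBetaLaw μ V0 (1 + α1) α2) (h1 : HasBetaLaw μ V1 1 α1) (h2 : HasBetaLaw μ V2 1 α1)
    (hind : iIndepFun ![V0, V1, V2] μ) :
    HasBetaLaw μ (fun ω => V0 ω * V1 ω) 1 (α1 + α2) ∧
      HasBetaLaw μ (fun ω => V0 ω * V2 ω) 1 (α1 + α2) := by
  have i01 : IndepFun V0 V1 μ := by
    have := hind.indepFun (i := 0) (j := 1) (by decide)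
    simpa using this
  have i02 : IndepFun V0 V2 μ := by
    have := hind.indepFun (i := 0) (j := 2) (by decide)
    simpa using this
  exact ⟨prodBetaLaw μ V0 V1 α1 α2 hα1 hα2 h0 h1 i01,
    prodBetaLaw μ V0 V2 α1 α2 hα1 hα2 h0 h2 i02⟩
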